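/- Let q be an odd prime power. The rank over F_2 of the matrix A_11, indexed by anisotropic points of PG(2,q) with (P,R)-entry 1 iff ⟨P,R⟩ = 0 under the bilinear form associated to Q(x) = x_1^2 − x_0 x_2, equals q^2 − 1 (i.e., one less than its order q^2). -/

import Mathlib

/-- The quadratic form `Q(x₀,x₁,x₂) = x₁² - x₀x₂` on `F³`. -/
def Qc (F : Type) [Field F] (v : Fin 3 → F) : F := v 1 ^ 2 - v 0 * v 2

/-- The bilinear form associated to `Qc`. -/
def Bc (F : Type) [Field F] (x y : Fin 3 → F) : F :=
  (2 : F)⁻¹ * (Qc F (x + y) - Qc F x - Qc F y)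

/-- A point of `PG(2,q)` is absolute if `Q` vanishes on it. -/
def Absolute (F : Type) [Field F] (P : Projectivization F (Fin 3 → F)) : Prop :=
  Qc F P.rep = 0

/-- A point of `PG(2,q)` is external if `Q` takes a nonzero square value on it. -/
def External (F : Type) [Field F] (P : Projectivization F (Fin 3 → F)) : Prop :=
  IsSquare (Qc F P.rep) ∧ Qc F P.rep ≠ 0

/-- A point of `PG(2,q)` is internal if `Q` takes a non-square value on it. -/
def Internal (F : Type) [Field F] (P : Projectivization F (Fin 3 → F)) : Prop :=
  ¬ IsSquare (Qc F P.rep)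

/-- Lines of `PG(2,q)` are the 2-dimensional subspaces of `F³`. -/
def IsLine (F : Type) [Field F] (L : Submodule F (Fin 3 → F)) : Prop :=
  Module.finrank F ↥L = 2

/-- The number of absolute points on a line. -/
noncomputable def nAbs (F : Type) [Field F] (L : Submodule F (Fin 3 → F)) : ℕ :=
  Nat.card {P : Projectivization F (Fin 3 → F) // Absolute F P ∧ P.submodule ≤ L}

open Classical in
/-- Indicator of a proposition in `F₂`. -/
noncomputable def ind (p : Prop) : ZMod 2 := if p then 1 else 0

/-- The incidence matrix between anisotropic points and the polar lines of
anisotropic points: the `(P,R)` entry is `1` iff `⟨P,R⟩ = 0`. -/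
noncomputable def A11 (F : Type) [Field F] :
    Matrix {P : Projectivization F (Fin 3 → F) // Qc F P.rep ≠ 0}
      {P : Projectivization F (Fin 3 → F) // Qc F P.rep ≠ 0} (ZMod 2) :=
  Matrix.of fun P R => ind (Bc F P.1.rep R.1.rep = 0)


-- ===== auxiliary development =====

namespace Scratch
variable {F : Type} [Field F]

/-- Polynomial (denominator-free) version of `2 * Bc`. -/
def Bp (x y : Fin 3 → F) : F := 2 * (x 1 * y 1) - (x 0 * y 2 + x 2 * y 0)

lemma Bc_eq (x y : Fin 3 → F) : Bc F x y = (2:F)⁻¹ * Bp x y := by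
  unfold Bc Qc Bp
  simp only [Pi.add_apply]
  ring

lemma Bc_eq_zero_iff (h2 : (2:F) ≠ 0) (x y : Fin 3 → F) :
    Bc F x y = 0 ↔ Bp x y = 0 := by
  rw [Bc_eq]
  constructor
  · intro h
    rcases mul_eq_zero.1 h with h | h
    · exact absurd (inv_eq_zero.1 h) h2
    · exact h
  · intro h; rw [h, mul_zero]

lemma Bc_symm (x y : Fin 3 → F) : Bc F x y = Bc F y x := by
  rw [Bc_eq, Bc_eq]; unfold Bp; ring

lemma Bc_self (h2 : (2:F) ≠ 0) (x : Fin 3 → F) : Bc F x x = Qc F x := by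
  rw [Bc_eq]; unfold Bp Qc; field_simp; ring

lemma Qc_smul (c : F) (v : Fin 3 → F) : Qc F (c • v) = c ^ 2 * Qc F v := by
  unfold Qc; simp only [Pi.smul_apply, smul_eq_mul]; ring

lemma Bc_smul_right (c : F) (u v : Fin 3 → F) : Bc F u (c • v) = c * Bc F u v := by
  rw [Bc_eq, Bc_eq]; unfold Bp; simp only [Pi.smul_apply, smul_eq_mul]; ring

/-- The "cross product" vector orthogonal (w.r.t. `Bc`) to both `u` and `v`. -/
def wvec (u v : Fin 3 → F) : Fin 3 → F :=
  ![2 * (u 0 * v 1 - u 1 * v 0), u 0 * v 2 - u 2 * v 0, 2 * (u 1 * v 2 - u 2 * v 1)]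

lemma Bp_wvec_left (u v : Fin 3 → F) : Bp u (wvec u v) = 0 := by
  unfold Bp wvec; simp [Matrix.cons_val_zero, Matrix.cons_val_one]; ring

lemma Bp_wvec_right (u v : Fin 3 → F) : Bp v (wvec u v) = 0 := by
  unfold Bp wvec; simp [Matrix.cons_val_zero, Matrix.cons_val_one]; ring

lemma Qc_wvec (u v : Fin 3 → F) :
    Qc F (wvec u v) = Bp u v ^ 2 - 4 * Qc F u * Qc F v := by
  unfold Qc Bp wvec; simp [Matrix.cons_val_zero, Matrix.cons_val_one]; ring

/-- If all 2×2 minors of `u, v` vanish then `v` is a multiple of `u`. -/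
lemma prop_of_minors (u v : Fin 3 → F) (hu : u ≠ 0)
    (h01 : u 0 * v 1 = u 1 * v 0) (h02 : u 0 * v 2 = u 2 * v 0)
    (h12 : u 1 * v 2 = u 2 * v 1) : ∃ c : F, v = c • u := by
  have hex : u 0 ≠ 0 ∨ u 1 ≠ 0 ∨ u 2 ≠ 0 := by
    by_contra h
    push_neg at h
    exact hu (funext fun i => by fin_cases i <;> simp [h.1, h.2.1, h.2.2])
  have e2 : (2 : Fin 3) = ⟨2, by norm_num⟩ := rfl
  rcases hex with h | h | h
  · refine ⟨v 0 / u 0, funext fun i => ?_⟩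
    fin_cases i <;> simp only [Pi.smul_apply, smul_eq_mul, ← e2, Fin.zero_eta, Fin.mk_one] <;> field_simp
    · linear_combination h01
    · linear_combination h02
  · refine ⟨v 1 / u 1, funext fun i => ?_⟩
    fin_cases i <;> simp only [Pi.smul_apply, smul_eq_mul, ← e2, Fin.zero_eta, Fin.mk_one] <;> field_simp
    · linear_combination -h01
    · linear_combination h12
  · refine ⟨v 2 / u 2, funext fun i => ?_⟩
    fin_cases i <;> simp only [Pi.smul_apply, smul_eq_mul, ← e2, Fin.zero_eta, Fin.mk_one] <;> field_simp
    · linear_combination -h02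
    · linear_combination -h12

/-- Anything `Bp`-orthogonal to `u` and `v` has vanishing minors with `wvec u v`. -/
lemma minors_of_perp (u v y : Fin 3 → F) (hy1 : Bp u y = 0) (hy2 : Bp v y = 0) :
    wvec u v 0 * y 1 = wvec u v 1 * y 0 ∧ wvec u v 0 * y 2 = wvec u v 2 * y 0 ∧
    wvec u v 1 * y 2 = wvec u v 2 * y 1 := by
  unfold Bp at hy1 hy2
  unfold wvec
  refine ⟨?_, ?_, ?_⟩ <;> simp [Matrix.cons_val_zero, Matrix.cons_val_one]
  · linear_combination (-(v 0)) * hy1 + u 0 * hy2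
  · linear_combination (-2 * v 1) * hy1 + 2 * u 1 * hy2
  · linear_combination (-(v 2)) * hy1 + u 2 * hy2
end Scratch

section ProjLayer
open Projectivization
variable {F : Type} [Field F]

lemma rep_mk_eq_smul (v : Fin 3 → F) (hv : v ≠ 0) :
    ∃ c : F, c ≠ 0 ∧ (Projectivization.mk F v hv).rep = c • v := by
  obtain ⟨a, ha⟩ := Projectivization.exists_smul_eq_mk_rep F v hv
  exact ⟨(a : F), a.ne_zero, ha.symm⟩

lemma Qc_rep_mk (v : Fin 3 → F) (hv : v ≠ 0) :
    (Qc F ((Projectivization.mk F v hv).rep) = 0) ↔ Qc F v = 0 := by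
  obtain ⟨c, hc, hrep⟩ := rep_mk_eq_smul v hv
  rw [hrep, Scratch.Qc_smul]
  simp [pow_eq_zero_iff, hc]

lemma Bc_rep_mk (u v : Fin 3 → F) (hv : v ≠ 0) :
    (Bc F u ((Projectivization.mk F v hv).rep) = 0) ↔ Bc F u v = 0 := by
  obtain ⟨c, hc, hrep⟩ := rep_mk_eq_smul v hv
  rw [hrep, Scratch.Bc_smul_right]
  simp [hc]

lemma Qc_zero_vec : Qc F (0 : Fin 3 → F) = 0 := by simp [Qc]

lemma ne_zero_of_Qc_ne (v : Fin 3 → F) (h : Qc F v ≠ 0) : v ≠ 0 := by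
  intro h0; rw [h0] at h; exact h Qc_zero_vec

/-- If two nonzero vectors give distinct projective points then `wvec` is nonzero. -/
lemma wvec_ne_zero (h2 : (2 : F) ≠ 0) (u v : Fin 3 → F) (hu : u ≠ 0) (hv : v ≠ 0)
    (hne : Projectivization.mk F u hu ≠ Projectivization.mk F v hv) :
    Scratch.wvec u v ≠ 0 := by
  intro hw
  apply hne
  have m01 : u 0 * v 1 = u 1 * v 0 := by
    have := congrFun hw 0
    simp [Scratch.wvec] at this
    rcases this with h | h
    · exact absurd h h2
    · linear_combination h
  have m02 : u 0 * v 2 = u 2 * v 0 := by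
    have := congrFun hw 1
    simp [Scratch.wvec] at this
    linear_combination this
  have m12 : u 1 * v 2 = u 2 * v 1 := by
    have := congrFun hw 2
    simp [Scratch.wvec] at this
    rcases this with h | h
    · exact absurd h h2
    · linear_combination h
  obtain ⟨c, hc⟩ := Scratch.prop_of_minors u v hu m01 m02 m12
  exact ((Projectivization.mk_eq_mk_iff' F v u hv hu).2 ⟨c, hc.symm⟩).symm

/-- The unique projective point `Bc`-orthogonal to two vectors with nonzero `wvec`. -/
lemma perp_eq (h2 : (2 : F) ≠ 0) (u v : Fin 3 → F)
    (hw : Scratch.wvec u v ≠ 0) (R : Projectivization F (Fin 3 → F)) :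
    (Bc F u R.rep = 0 ∧ Bc F v R.rep = 0) ↔ R = Projectivization.mk F (Scratch.wvec u v) hw := by
  constructor
  · rintro ⟨hru, hrv⟩
    have hy1 : Scratch.Bp u R.rep = 0 := (Scratch.Bc_eq_zero_iff h2 _ _).1 hru
    have hy2 : Scratch.Bp v R.rep = 0 := (Scratch.Bc_eq_zero_iff h2 _ _).1 hrv
    obtain ⟨m01, m02, m12⟩ := Scratch.minors_of_perp u v R.rep hy1 hy2
    obtain ⟨c, hc⟩ := Scratch.prop_of_minors (Scratch.wvec u v) R.rep hw m01 m02 m12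
    conv_lhs => rw [← R.mk_rep]
    rw [Projectivization.mk_eq_mk_iff']
    exact ⟨c, hc.symm⟩
  · rintro rfl
    constructor
    · rw [Bc_rep_mk, Scratch.Bc_eq_zero_iff h2]
      exact Scratch.Bp_wvec_left u v
    · rw [Bc_rep_mk, Scratch.Bc_eq_zero_iff h2]
      exact Scratch.Bp_wvec_right u v

end ProjLayer

section IndLayer

lemma ind_pos {p : Prop} (h : p) : ind p = 1 := by unfold ind; exact if_pos h
lemma ind_neg {p : Prop} (h : ¬ p) : ind p = 0 := by unfold ind; exact if_neg h

lemma ind_mul_ind (p q : Prop) : ind p * ind q = ind (p ∧ q) := by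
  by_cases hp : p <;> by_cases hq : q <;>
    simp [ind_pos, ind_neg, hp, hq]

lemma z2_add_self (a : ZMod 2) : a + a = 0 := by
  have : ∀ a : ZMod 2, a + a = 0 := by decide
  exact this a

lemma z2_eq_of_add_eq_zero {a b : ZMod 2} (h : a + b = 0) : a = b := by
  have : ∀ a b : ZMod 2, a + b = 0 → a = b := by decide
  exact this a b h

variable {γ : Type} [Fintype γ]

lemma sum_ind_unique (c : γ → Prop) (g : γ → ZMod 2) (r : γ) (h : ∀ t, c t ↔ t = r) :
    ∑ t : γ, ind (c t) * g t = g r := by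
  rw [Finset.sum_eq_single r]
  · rw [ind_pos ((h r).2 rfl), one_mul]
  · intro b _ hb
    rw [ind_neg (fun hc => hb ((h b).1 hc)), zero_mul]
  · intro hr; exact absurd (Finset.mem_univ r) hr

lemma sum_ind_empty (c : γ → Prop) (g : γ → ZMod 2) (h : ∀ t, ¬ c t) :
    ∑ t : γ, ind (c t) * g t = 0 :=
  Finset.sum_eq_zero fun t _ => by rw [ind_neg (h t), zero_mul]

lemma sum_ind_single (c : γ → Prop) (r : γ) (h : ∀ t, c t ↔ t = r) :
    ∑ t : γ, ind (c t) = 1 := by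
  have := sum_ind_unique c (fun _ => 1) r h
  simpa using this

lemma sum_ind_none (c : γ → Prop) (h : ∀ t, ¬ c t) : ∑ t : γ, ind (c t) = 0 := by
  have := sum_ind_empty c (fun _ => 1) h
  simpa using this

lemma sum_ind_pair (c : γ → Prop) (r s : γ) (hrs : r ≠ s) (h : ∀ t, c t ↔ t = r ∨ t = s) :
    ∑ t : γ, ind (c t) = 0 := by
  classical
  have step : ∀ t, ind (c t) = ind (t = r) + ind (t = s) := by
    intro t
    by_cases h1 : t = r
    · subst h1
      rw [ind_pos ((h t).2 (Or.inl rfl)), ind_pos rfl, ind_neg hrs]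
      norm_num
    · by_cases h2 : t = s
      · subst h2
        rw [ind_pos ((h t).2 (Or.inr rfl)), ind_neg h1, ind_pos rfl]
        norm_num
      · rw [ind_neg (fun hc => by rcases (h t).1 hc with h' | h' <;> [exact h1 h'; exact h2 h']),
          ind_neg h1, ind_neg h2]
        norm_num
  rw [Finset.sum_congr rfl (fun t _ => step t), Finset.sum_add_distrib,
    sum_ind_single (fun t => t = r) r (fun t => Iff.rfl),
    sum_ind_single (fun t => t = s) s (fun t => Iff.rfl)]
  decide

end IndLayer

section Quadratic
variable {F : Type} [Field F] [Fintype F]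

lemma sum_ind_quadratic (a b c : F) (ha : a ≠ 0) (hd : b ^ 2 - 4 * a * c ≠ 0) :
    ∑ t : F, ind (a * t ^ 2 + b * t + c = 0) = 0 := by
  by_cases hex : ∃ r, a * r ^ 2 + b * r + c = 0
  · obtain ⟨r, hr⟩ := hex
    set s := (-b - a * r) / a with hs
    have hfac : ∀ t, a * t ^ 2 + b * t + c = (t - r) * (a * t + b + a * r) := by
      intro t; linear_combination hr
    have hsr : a * s + b + a * r = 0 := by
      rw [hs]; field_simp; ring
    have hrs : r ≠ s := by
      intro hrs'
      apply hd
      have hb : b = -2 * a * r := by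
        rw [← hrs'] at hsr
        linear_combination hsr
      have hc : c = a * r ^ 2 := by linear_combination hr + (-r) * hb
      rw [hb, hc]; ring
    have key : ∀ t, (a * t ^ 2 + b * t + c = 0) ↔ (t = r ∨ t = s) := by
      intro t
      rw [hfac t]
      constructor
      · intro ht
        rcases mul_eq_zero.1 ht with h' | h'
        · exact Or.inl (sub_eq_zero.1 h')
        · right
          have : a * t = a * s := by linear_combination h' - hsr
          exact mul_left_cancel₀ ha this
      · rintro (rfl | rfl)
        · simp
        · rw [hsr, mul_zero]
    exact sum_ind_pair _ r s hrs key
  · push_neg at hex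
    exact sum_ind_none _ hex

end Quadratic

lemma z2_rot {a b c : ZMod 2} (h : a = b + c) : b = c + a := by
  have : ∀ a b c : ZMod 2, a = b + c → b = c + a := by decide
  exact this a b c h

section Conic
variable {F : Type} [Field F]

/-- Points of the conic: `[1 : t : t²]`. -/
def cvec (t : F) : Fin 3 → F := ![1, t, t ^ 2]

def ivec : Fin 3 → F := ![0, 0, 1]

lemma cvec_ne_zero (t : F) : cvec t ≠ 0 := by
  intro h
  have := congrFun h 0
  simp [cvec] at this

lemma ivec_ne_zero : (ivec : Fin 3 → F) ≠ 0 := by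
  intro h
  have := congrFun h 2
  simp [ivec] at this

lemma Qc_cvec (t : F) : Qc F (cvec t) = 0 := by simp [Qc, cvec]

lemma Qc_ivec : Qc F (ivec : Fin 3 → F) = 0 := by simp [Qc, ivec]

/-- Parametrization of the absolute points by `Option F`. -/
noncomputable def conicMap (o : Option F) : {P : Projectivization F (Fin 3 → F) // Qc F P.rep = 0} :=
  match o with
  | none => ⟨Projectivization.mk F ivec ivec_ne_zero, (Qc_rep_mk _ _).2 Qc_ivec⟩
  | some t => ⟨Projectivization.mk F (cvec t) (cvec_ne_zero t), (Qc_rep_mk _ _).2 (Qc_cvec t)⟩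

lemma conicMap_bijective : Function.Bijective (conicMap (F := F)) := by
  constructor
  · intro o1 o2 h
    rw [Subtype.ext_iff] at h
    simp only [conicMap] at h
    match o1, o2 with
    | none, none => rfl
    | none, some t =>
      exfalso
      rw [Projectivization.mk_eq_mk_iff'] at h
      obtain ⟨a, ha⟩ := h
      have h0 := congrFun ha 0
      have h2 := congrFun ha 2
      simp [cvec, ivec] at h0 h2
      rw [h0] at h2
      simp at h2
    | some t, none =>
      exfalso
      rw [Projectivization.mk_eq_mk_iff'] at h
      obtain ⟨a, ha⟩ := h
      exact absurd (congrFun ha 0) (by simp [cvec, ivec])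
    | some t, some t' =>
      rw [Projectivization.mk_eq_mk_iff'] at h
      obtain ⟨a, ha⟩ := h
      have h0 := congrFun ha 0
      have h1 := congrFun ha 1
      simp [cvec] at h0 h1
      rw [h0, one_mul] at h1
      rw [h1]
  · rintro ⟨X, hX⟩
    have hQ : X.rep 1 ^ 2 - X.rep 0 * X.rep 2 = 0 := hX
    by_cases h0 : X.rep 0 = 0
    · have h1 : X.rep 1 = 0 := by
        have hsq : X.rep 1 ^ 2 = 0 := by linear_combination hQ + X.rep 2 * h0
        exact pow_eq_zero_iff (two_ne_zero) |>.1 hsq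
      refine ⟨none, Subtype.ext ?_⟩
      show Projectivization.mk F ivec ivec_ne_zero = X
      symm
      conv_lhs => rw [← X.mk_rep]
      rw [Projectivization.mk_eq_mk_iff']
      refine ⟨X.rep 2, funext fun i => ?_⟩
      fin_cases i <;> simp [ivec]
      · exact h0.symm
      · exact h1.symm
    · refine ⟨some (X.rep 1 / X.rep 0), Subtype.ext ?_⟩
      show Projectivization.mk F (cvec (X.rep 1 / X.rep 0)) _ = X
      symm
      conv_lhs => rw [← X.mk_rep]
      rw [Projectivization.mk_eq_mk_iff']
      refine ⟨X.rep 0, funext fun i => ?_⟩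
      fin_cases i <;> simp [cvec]
      · field_simp
      · rw [div_pow, pow_two (X.rep 0)]
        rw [mul_div_assoc']
        rw [div_eq_iff (by exact mul_ne_zero h0 h0)]
        linear_combination X.rep 0 * hQ
end Conic

section Even
set_option maxHeartbeats 1000000
variable {F : Type} [Field F] [Fintype F]

lemma fourNeZero (h2 : (2:F) ≠ 0) : (4:F) ≠ 0 := by
  intro h
  apply h2
  have h4 : (4:F) = 2 * 2 := by norm_num
  rw [h4] at h
  rcases mul_eq_zero.1 h with h' | h' <;> exact h'

lemma evenAbs (h2 : (2:F) ≠ 0)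
    [Fintype {P : Projectivization F (Fin 3 → F) // Qc F P.rep = 0}]
    (p : Fin 3 → F) (hp : Qc F p ≠ 0) :
    ∑ X : {P : Projectivization F (Fin 3 → F) // Qc F P.rep = 0},
      ind (Bc F p X.1.rep = 0) = 0 := by
  rw [← Function.Bijective.sum_comp conicMap_bijective (fun X => ind (Bc F p X.1.rep = 0))]
  rw [Fintype.sum_option]
  have hnone : (Bc F p (conicMap (F := F) none).1.rep = 0) ↔ p 0 = 0 := by
    show (Bc F p (Projectivization.mk F ivec ivec_ne_zero).rep = 0) ↔ _
    rw [Bc_rep_mk, Scratch.Bc_eq_zero_iff h2]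
    unfold Scratch.Bp ivec
    simp
  have hsome : ∀ t : F, (Bc F p (conicMap (F := F) (some t)).1.rep = 0) ↔
      p 0 * t ^ 2 + (-2 * p 1) * t + p 2 = 0 := by
    intro t
    show (Bc F p (Projectivization.mk F (cvec t) (cvec_ne_zero t)).rep = 0) ↔ _
    rw [Bc_rep_mk, Scratch.Bc_eq_zero_iff h2]
    unfold Scratch.Bp cvec
    simp only [Matrix.cons_val_zero, Matrix.cons_val_one, Matrix.head_cons,
      Matrix.cons_val_two, Matrix.tail_cons]
    constructor <;> intro h <;> linear_combination -h
  by_cases hp0 : p 0 = 0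
  · have hp1 : p 1 ≠ 0 := by
      intro h1
      apply hp
      unfold Qc
      rw [hp0, h1]
      ring
    rw [ind_pos (hnone.2 hp0)]
    have hsum : ∑ t : F, ind (Bc F p (conicMap (F := F) (some t)).1.rep = 0) = 1 := by
      apply sum_ind_single _ (p 2 / (2 * p 1))
      intro t
      rw [hsome t, hp0]
      rw [eq_div_iff (mul_ne_zero h2 hp1)]
      constructor <;> intro h <;> linear_combination -h
    rw [hsum]
    decide
  · rw [ind_neg (fun h => hp0 (hnone.1 h))]
    have hsum : ∑ t : F, ind (Bc F p (conicMap (F := F) (some t)).1.rep = 0) = 0 := by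
      rw [Finset.sum_congr rfl (fun t _ => by rw [show ind (Bc F p (conicMap (F := F) (some t)).1.rep = 0)
        = ind (p 0 * t ^ 2 + (-2 * p 1) * t + p 2 = 0) from by
          by_cases h : Bc F p (conicMap (F := F) (some t)).1.rep = 0
          · rw [ind_pos h, ind_pos ((hsome t).1 h)]
          · rw [ind_neg h, ind_neg (fun h' => h ((hsome t).2 h'))]])]
      apply sum_ind_quadratic _ _ _ hp0
      intro hd
      apply hp
      have h4 : (4:F) * Qc F p = 0 := by
        unfold Qc
        linear_combination hd
      rcases mul_eq_zero.1 h4 with h' | h'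
      · exact absurd h' (fourNeZero h2)
      · exact h'
    rw [hsum]
    decide

lemma evenPts (h2 : (2:F) ≠ 0)
    [Fintype {P : Projectivization F (Fin 3 → F) // Qc F P.rep ≠ 0}]
    (p : Fin 3 → F) (hp : Qc F p ≠ 0) :
    ∑ R : {P : Projectivization F (Fin 3 → F) // Qc F P.rep ≠ 0},
      ind (Bc F p R.1.rep = 0) = 0 := by
  classical
  have hpart : ∀ R : {P : Projectivization F (Fin 3 → F) // Qc F P.rep ≠ 0},
      Bc F p R.1.rep = 0 → Qc F (Scratch.wvec p R.1.rep) ≠ 0 := by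
    intro R h hQw
    rw [Scratch.Qc_wvec, (Scratch.Bc_eq_zero_iff h2 _ _).1 h] at hQw
    have h4 : (4:F) * (Qc F p * Qc F R.1.rep) = 0 := by linear_combination -hQw
    rcases mul_eq_zero.1 h4 with h' | h'
    · exact absurd h' (fourNeZero h2)
    · rcases mul_eq_zero.1 h' with h'' | h''
      · exact hp h''
      · exact R.2 h''
  set g : {P : Projectivization F (Fin 3 → F) // Qc F P.rep ≠ 0} →
      {P : Projectivization F (Fin 3 → F) // Qc F P.rep ≠ 0} := fun R =>
    if h : Bc F p R.1.rep = 0 then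
      ⟨Projectivization.mk F (Scratch.wvec p R.1.rep) (ne_zero_of_Qc_ne _ (hpart R h)),
        fun hc => (hpart R h) ((Qc_rep_mk _ _).1 hc)⟩
    else R with hgdef
  have hg_pos : ∀ R (h : Bc F p R.1.rep = 0),
      g R = ⟨Projectivization.mk F (Scratch.wvec p R.1.rep) (ne_zero_of_Qc_ne _ (hpart R h)),
        fun hc => (hpart R h) ((Qc_rep_mk _ _).1 hc)⟩ := by
    intro R h
    rw [hgdef]
    exact dif_pos h
  have hg_neg : ∀ R, ¬ (Bc F p R.1.rep = 0) → g R = R := by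
    intro R h
    rw [hgdef]
    exact dif_neg h
  have fact1 : ∀ R (h : Bc F p R.1.rep = 0), Bc F p (g R).1.rep = 0 := by
    intro R h
    rw [hg_pos R h]
    show Bc F p (Projectivization.mk F _ _).rep = 0
    rw [Bc_rep_mk, Scratch.Bc_eq_zero_iff h2]
    exact Scratch.Bp_wvec_left p R.1.rep
  have fact2 : ∀ R (h : Bc F p R.1.rep = 0), Bc F R.1.rep (g R).1.rep = 0 := by
    intro R h
    rw [hg_pos R h]
    show Bc F R.1.rep (Projectivization.mk F _ _).rep = 0
    rw [Bc_rep_mk, Scratch.Bc_eq_zero_iff h2]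
    exact Scratch.Bp_wvec_right p R.1.rep
  apply Finset.sum_ninvolution g
  · intro R
    by_cases h : Bc F p R.1.rep = 0
    · rw [ind_pos h, ind_pos (fact1 R h)]
      decide
    · rw [hg_neg R h, ind_neg h]
      decide
  · intro R hne heq
    have h : Bc F p R.1.rep = 0 := by
      by_contra h
      exact hne (ind_neg h)
    have h2' := fact2 R h
    rw [heq] at h2'
    rw [Scratch.Bc_self h2] at h2'
    exact R.2 h2'
  · intro R
    exact Finset.mem_univ _
  · intro R
    by_cases h : Bc F p R.1.rep = 0
    · have hgh : Bc F p (g R).1.rep = 0 := fact1 R h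
      rw [hg_pos (g R) hgh]
      apply Subtype.ext
      show Projectivization.mk F (Scratch.wvec p (g R).1.rep) _ = R.1
      symm
      rw [← perp_eq h2 p (g R).1.rep (ne_zero_of_Qc_ne _ (hpart (g R) hgh)) R.1]
      exact ⟨h, by rw [Scratch.Bc_symm]; exact fact2 R h⟩
    · rw [hg_neg R h, hg_neg R h]
end Even

section Uniq
variable {F : Type} [Field F]

lemma sum_pts_perp_zero [Fintype {P : Projectivization F (Fin 3 → F) // Qc F P.rep ≠ 0}]
    (h2 : (2:F) ≠ 0) (u v : Fin 3 → F) (hw : Scratch.wvec u v ≠ 0)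
    (hq : Qc F (Scratch.wvec u v) = 0)
    (g : {P : Projectivization F (Fin 3 → F) // Qc F P.rep ≠ 0} → ZMod 2) :
    ∑ R : {P : Projectivization F (Fin 3 → F) // Qc F P.rep ≠ 0},
      ind (Bc F u R.1.rep = 0 ∧ Bc F v R.1.rep = 0) * g R = 0 := by
  apply sum_ind_empty
  intro R hR
  have h := (perp_eq h2 u v hw R.1).1 hR
  apply R.2
  rw [h]
  exact (Qc_rep_mk _ _).2 hq

lemma sum_pts_perp_ne [Fintype {P : Projectivization F (Fin 3 → F) // Qc F P.rep ≠ 0}]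
    (h2 : (2:F) ≠ 0) (u v : Fin 3 → F) (hq : Qc F (Scratch.wvec u v) ≠ 0)
    (g : {P : Projectivization F (Fin 3 → F) // Qc F P.rep ≠ 0} → ZMod 2) :
    ∑ R : {P : Projectivization F (Fin 3 → F) // Qc F P.rep ≠ 0},
      ind (Bc F u R.1.rep = 0 ∧ Bc F v R.1.rep = 0) * g R
      = g ⟨Projectivization.mk F (Scratch.wvec u v) (ne_zero_of_Qc_ne _ hq),
          fun hc => hq ((Qc_rep_mk _ _).1 hc)⟩ := by
  apply sum_ind_unique
  intro R
  rw [perp_eq h2 u v (ne_zero_of_Qc_ne _ hq) R.1]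
  exact ⟨fun h => Subtype.ext h, fun h => congrArg Subtype.val h⟩

lemma sum_abs_perp_zero [Fintype {P : Projectivization F (Fin 3 → F) // Qc F P.rep = 0}]
    (h2 : (2:F) ≠ 0) (u v : Fin 3 → F) (hw : Scratch.wvec u v ≠ 0)
    (hq : Qc F (Scratch.wvec u v) ≠ 0)
    (g : {P : Projectivization F (Fin 3 → F) // Qc F P.rep = 0} → ZMod 2) :
    ∑ X : {P : Projectivization F (Fin 3 → F) // Qc F P.rep = 0},
      ind (Bc F u X.1.rep = 0 ∧ Bc F v X.1.rep = 0) * g X = 0 := by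
  apply sum_ind_empty
  intro X hX
  have h := (perp_eq h2 u v hw X.1).1 hX
  apply hq
  have := X.2
  rw [h] at this
  exact (Qc_rep_mk _ _).1 this

lemma sum_abs_perp_one [Fintype {P : Projectivization F (Fin 3 → F) // Qc F P.rep = 0}]
    (h2 : (2:F) ≠ 0) (u v : Fin 3 → F) (hw : Scratch.wvec u v ≠ 0)
    (hq : Qc F (Scratch.wvec u v) = 0)
    (g : {P : Projectivization F (Fin 3 → F) // Qc F P.rep = 0} → ZMod 2) :
    ∑ X : {P : Projectivization F (Fin 3 → F) // Qc F P.rep = 0},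
      ind (Bc F u X.1.rep = 0 ∧ Bc F v X.1.rep = 0) * g X
      = g ⟨Projectivization.mk F (Scratch.wvec u v) hw, (Qc_rep_mk _ _).2 hq⟩ := by
  apply sum_ind_unique
  intro X
  rw [perp_eq h2 u v hw X.1]
  exact ⟨fun h => Subtype.ext h, fun h => congrArg Subtype.val h⟩

end Uniq

section Count
variable {F : Type} [Field F] [Fintype F]

lemma card_fiber (pred : Projectivization F (Fin 3 → F) → Prop)
    [Fintype {P : Projectivization F (Fin 3 → F) // pred P}]
    [Fintype {v : Fin 3 → F // ∃ h : v ≠ 0, pred (Projectivization.mk F v h)}] :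
    Fintype.card {v : Fin 3 → F // ∃ h : v ≠ 0, pred (Projectivization.mk F v h)}
      = Fintype.card {P : Projectivization F (Fin 3 → F) // pred P} * (Fintype.card F - 1) := by
  classical
  set f : {v : Fin 3 → F // ∃ h : v ≠ 0, pred (Projectivization.mk F v h)} →
      {P : Projectivization F (Fin 3 → F) // pred P} :=
    fun a => ⟨Projectivization.mk F a.1 a.2.choose, a.2.choose_spec⟩ with hf
  have hcard := Fintype.card_congr (Equiv.sigmaFiberEquiv f).symm
  rw [Fintype.card_sigma] at hcard
  have hfib : ∀ P : {P : Projectivization F (Fin 3 → F) // pred P},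
      Fintype.card {a // f a = P} = Fintype.card F - 1 := by
    intro P
    have hrepne : P.1.rep ≠ 0 := P.1.rep_nonzero
    set e : Fˣ → {a // f a = P} := fun c =>
      ⟨⟨(c : F) • P.1.rep, by
        refine ⟨smul_ne_zero c.ne_zero hrepne, ?_⟩
        have : Projectivization.mk F ((c : F) • P.1.rep) (smul_ne_zero c.ne_zero hrepne)
            = P.1 := by
          conv_rhs => rw [← P.1.mk_rep]
          rw [Projectivization.mk_eq_mk_iff']
          exact ⟨(c : F), rfl⟩
        rw [this]
        exact P.2⟩, by
        apply Subtype.ext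
        show Projectivization.mk F _ _ = P.1
        conv_rhs => rw [← P.1.mk_rep]
        rw [Projectivization.mk_eq_mk_iff']
        exact ⟨(c : F), rfl⟩⟩ with he
    have hbij : Function.Bijective e := by
      constructor
      · intro c1 c2 hc
        have : (c1 : F) • P.1.rep = (c2 : F) • P.1.rep := by
          have := congrArg (fun a => a.1.1) hc
          exact this
        have hsub : ((c1 : F) - (c2 : F)) • P.1.rep = 0 := by
          rw [sub_smul, this, sub_self]
        rcases smul_eq_zero.1 hsub with h' | h'
        · exact Units.ext (by linear_combination h')
        · exact absurd h' hrepne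
      · rintro ⟨⟨v, hv⟩, hfv⟩
        have : Projectivization.mk F v hv.choose = P.1 := by
          have := congrArg Subtype.val hfv
          exact this
        rw [← P.1.mk_rep, Projectivization.mk_eq_mk_iff] at this
        obtain ⟨u, hu⟩ := this
        exact ⟨u, Subtype.ext (Subtype.ext hu)⟩
    rw [← Fintype.card_of_bijective hbij]
    rw [Fintype.card_units]
  rw [Finset.sum_congr rfl (fun P _ => hfib P), Finset.sum_const, smul_eq_mul,
    Finset.card_univ] at hcard
  exact hcard

lemma card_abs [Fintype {P : Projectivization F (Fin 3 → F) // Qc F P.rep = 0}] :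
    Fintype.card {P : Projectivization F (Fin 3 → F) // Qc F P.rep = 0}
      = Fintype.card F + 1 := by
  rw [← Fintype.card_option (α := F)]
  exact (Fintype.card_of_bijective (conicMap_bijective (F := F))).symm

lemma finite_proj : Finite (Projectivization F (Fin 3 → F)) :=
  (Quotient.finite _)

lemma card_isotropic_vec [Fintype {v : Fin 3 → F // Qc F v = 0}] :
    Fintype.card {v : Fin 3 → F // Qc F v = 0}
      = (Fintype.card F + 1) * (Fintype.card F - 1) + 1 := by
  classical
  haveI := finite_proj (F := F)
  haveI := Fintype.ofFinite {P : Projectivization F (Fin 3 → F) // Qc F P.rep = 0}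
  have e1 : {v : Fin 3 → F // ∃ h : v ≠ 0, Qc F (Projectivization.mk F v h).rep = 0}
      ≃ {v : Fin 3 → F // v ≠ 0 ∧ Qc F v = 0} := by
    apply Equiv.subtypeEquivRight
    intro v
    constructor
    · rintro ⟨h, hq⟩
      exact ⟨h, (Qc_rep_mk v h).1 hq⟩
    · rintro ⟨h, hq⟩
      exact ⟨h, (Qc_rep_mk v h).2 hq⟩
  have h1 : Fintype.card {v : Fin 3 → F // v ≠ 0 ∧ Qc F v = 0}
      = (Fintype.card F + 1) * (Fintype.card F - 1) := by
    rw [← Fintype.card_congr e1, card_fiber (fun P => Qc F P.rep = 0), card_abs]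
  have e2 : Option {v : Fin 3 → F // v ≠ 0 ∧ Qc F v = 0} ≃ {v : Fin 3 → F // Qc F v = 0} := by
    apply Equiv.ofBijective (fun o => o.elim ⟨0, Qc_zero_vec⟩ (fun a => ⟨a.1, a.2.2⟩))
    constructor
    · intro o1 o2 h
      match o1, o2 with
      | none, none => rfl
      | none, some a =>
        exact absurd (congrArg Subtype.val h).symm a.2.1
      | some a, none =>
        exact absurd (congrArg Subtype.val h) a.2.1
      | some a, some b =>
        have hval := congrArg Subtype.val h
        simp only [Option.elim] at hval
        exact congrArg some (Subtype.ext hval)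
    · rintro ⟨v, hv⟩
      by_cases h0 : v = 0
      · exact ⟨none, by simp [Option.elim, h0]⟩
      · exact ⟨some ⟨v, h0, hv⟩, rfl⟩
  rw [← Fintype.card_congr e2, Fintype.card_option, h1]

lemma card_pts [Fintype {P : Projectivization F (Fin 3 → F) // Qc F P.rep ≠ 0}] :
    Fintype.card {P : Projectivization F (Fin 3 → F) // Qc F P.rep ≠ 0}
      = Fintype.card F ^ 2 := by
  classical
  set q := Fintype.card F with hq
  have hq2 : 2 ≤ q := Fintype.one_lt_card
  have e1 : {v : Fin 3 → F // ∃ h : v ≠ 0, Qc F (Projectivization.mk F v h).rep ≠ 0}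
      ≃ {v : Fin 3 → F // Qc F v ≠ 0} := by
    apply Equiv.subtypeEquivRight
    intro v
    constructor
    · rintro ⟨h, hqv⟩
      exact fun hc => hqv ((Qc_rep_mk v h).2 hc)
    · intro hqv
      exact ⟨ne_zero_of_Qc_ne v hqv, fun hc => hqv ((Qc_rep_mk v _).1 hc)⟩
  have hfib := card_fiber (F := F) (fun P => Qc F P.rep ≠ 0)
  rw [Fintype.card_congr e1] at hfib
  have hcompl : Fintype.card {v : Fin 3 → F // Qc F v ≠ 0}
      = q ^ 3 - ((q + 1) * (q - 1) + 1) := by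
    have hc := Fintype.card_subtype_compl (fun v : Fin 3 → F => Qc F v = 0)
    rw [card_isotropic_vec, Fintype.card_fun, Fintype.card_fin] at hc
    exact hc
  have harith : ∀ n : ℕ, 2 ≤ n → n ^ 3 - ((n + 1) * (n - 1) + 1) = n ^ 2 * (n - 1) := by
    intro n hn
    obtain ⟨m, rfl⟩ : ∃ m, n = m + 2 := ⟨n - 2, by omega⟩
    have hs : m + 2 - 1 = m + 1 := by omega
    rw [hs]
    have h1 : (m+2)^3 = m^3+6*m^2+12*m+8 := by ring
    have h2 : (m+2+1)*(m+1)+1 = m^2+4*m+4 := by ring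
    have h3 : (m+2)^2*(m+1) = m^3+5*m^2+8*m+4 := by ring
    rw [h1, h2, h3]
    omega
  rw [hcompl, harith q hq2] at hfib
  have := Nat.eq_of_mul_eq_mul_right (show 0 < q - 1 by omega) hfib
  omega

end Count

section Kernel
variable {F : Type} [Field F] [Fintype F]

lemma swap_helper {γ : Type} [Fintype γ] (a : γ → ZMod 2) (b : γ → γ → ZMod 2)
    (x : γ → ZMod 2) :
    ∑ R : γ, a R * ∑ P : γ, b R P * x P = ∑ P : γ, (∑ R : γ, a R * b R P) * x P := by
  simp_rw [Finset.mul_sum]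
  rw [Finset.sum_comm]
  simp_rw [Finset.sum_mul, mul_assoc]

/-- Points `X, A` with `Qc X.rep = 0 ≠ Qc A.rep` are distinct, so `wvec` is nonzero. -/
lemma wvec_ne_zero_of_qc (h2 : (2:F) ≠ 0) (u v : Fin 3 → F) (hu : u ≠ 0) (hv : v ≠ 0)
    (hQ : Qc F u = 0) (hQv : Qc F v ≠ 0) : Scratch.wvec u v ≠ 0 := by
  apply wvec_ne_zero h2 u v hu hv
  intro hmk
  apply hQv
  have h1 : Qc F (Projectivization.mk F u hu).rep = 0 := (Qc_rep_mk u hu).2 hQ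
  rw [hmk] at h1
  exact (Qc_rep_mk v hv).1 h1

lemma dagger (h2 : (2:F) ≠ 0)
    [Fintype {P : Projectivization F (Fin 3 → F) // Qc F P.rep ≠ 0}]
    (x : {P : Projectivization F (Fin 3 → F) // Qc F P.rep ≠ 0} → ZMod 2)
    (hx : ∀ P : {P : Projectivization F (Fin 3 → F) // Qc F P.rep ≠ 0},
      ∑ R : {P : Projectivization F (Fin 3 → F) // Qc F P.rep ≠ 0},
        ind (Bc F P.1.rep R.1.rep = 0) * x R = 0)
    (X : {P : Projectivization F (Fin 3 → F) // Qc F P.rep = 0}) :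
    ∑ R : {P : Projectivization F (Fin 3 → F) // Qc F P.rep ≠ 0},
      ind (Bc F X.1.rep R.1.rep = 0) * x R
      = ∑ R : {P : Projectivization F (Fin 3 → F) // Qc F P.rep ≠ 0}, x R := by
  classical
  set u := X.1.rep with hu
  have hS1 : ∑ R : {P : Projectivization F (Fin 3 → F) // Qc F P.rep ≠ 0},
      ind (Bc F u R.1.rep = 0) *
        ∑ P : {P : Projectivization F (Fin 3 → F) // Qc F P.rep ≠ 0},
          ind (Bc F R.1.rep P.1.rep = 0) * x P = 0 := by
    apply Finset.sum_eq_zero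
    intro R _
    rw [hx R, mul_zero]
  rw [swap_helper] at hS1
  -- rewrite the inner coefficient
  have hcoeff : ∀ P : {P : Projectivization F (Fin 3 → F) // Qc F P.rep ≠ 0},
      (∑ R : {P : Projectivization F (Fin 3 → F) // Qc F P.rep ≠ 0},
        ind (Bc F u R.1.rep = 0) * ind (Bc F R.1.rep P.1.rep = 0))
      = 1 + ind (Bc F u P.1.rep = 0) := by
    intro P
    have hstep : ∀ R : {P : Projectivization F (Fin 3 → F) // Qc F P.rep ≠ 0},
        ind (Bc F u R.1.rep = 0) * ind (Bc F R.1.rep P.1.rep = 0)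
        = ind (Bc F u R.1.rep = 0 ∧ Bc F P.1.rep R.1.rep = 0) * (1 : ZMod 2) := by
      intro R
      rw [mul_one, ind_mul_ind, Scratch.Bc_symm R.1.rep P.1.rep]
    rw [Finset.sum_congr rfl (fun R _ => hstep R)]
    have hwne : Scratch.wvec u P.1.rep ≠ 0 :=
      wvec_ne_zero_of_qc h2 u P.1.rep X.1.rep_nonzero P.1.rep_nonzero X.2 P.2
    have hqw : Qc F (Scratch.wvec u P.1.rep) = Scratch.Bp u P.1.rep ^ 2 := by
      rw [Scratch.Qc_wvec, show Qc F u = 0 from X.2]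
      ring
    by_cases hc : Qc F (Scratch.wvec u P.1.rep) = 0
    · rw [sum_pts_perp_zero h2 u P.1.rep hwne hc]
      have hbc : Bc F u P.1.rep = 0 := by
        rw [hqw] at hc
        have := pow_eq_zero_iff (n := 2) two_ne_zero |>.1 hc
        rw [Scratch.Bc_eq_zero_iff h2]
        exact this
      rw [ind_pos hbc]
      decide
    · rw [sum_pts_perp_ne h2 u P.1.rep hc]
      have hbc : ¬ (Bc F u P.1.rep = 0) := by
        intro hb
        apply hc
        rw [hqw, (Scratch.Bc_eq_zero_iff h2 _ _).1 hb]
        ring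
      rw [ind_neg hbc]
      decide
  rw [Finset.sum_congr rfl (fun P _ => by rw [hcoeff P])] at hS1
  have hsplit : ∀ P : {P : Projectivization F (Fin 3 → F) // Qc F P.rep ≠ 0},
      (1 + ind (Bc F u P.1.rep = 0)) * x P = x P + ind (Bc F u P.1.rep = 0) * x P := by
    intro P; ring
  rw [Finset.sum_congr rfl (fun P _ => hsplit P), Finset.sum_add_distrib] at hS1
  exact z2_eq_of_add_eq_zero ((add_comm _ _).trans hS1)
end Kernel

section Kernel2
variable {F : Type} [Field F] [Fintype F]

lemma ker_constant (h2 : (2:F) ≠ 0)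
    [Fintype {P : Projectivization F (Fin 3 → F) // Qc F P.rep ≠ 0}]
    [Fintype {P : Projectivization F (Fin 3 → F) // Qc F P.rep = 0}]
    (x : {P : Projectivization F (Fin 3 → F) // Qc F P.rep ≠ 0} → ZMod 2)
    (hx : ∀ P : {P : Projectivization F (Fin 3 → F) // Qc F P.rep ≠ 0},
      ∑ R : {P : Projectivization F (Fin 3 → F) // Qc F P.rep ≠ 0},
        ind (Bc F P.1.rep R.1.rep = 0) * x R = 0)
    (P : {P : Projectivization F (Fin 3 → F) // Qc F P.rep ≠ 0}) :
    x P = ∑ R : {P : Projectivization F (Fin 3 → F) // Qc F P.rep ≠ 0}, x R := by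
  classical
  have hwneS : ∀ S : {P : Projectivization F (Fin 3 → F) // Qc F P.rep ≠ 0},
      S ≠ P → Scratch.wvec P.1.rep S.1.rep ≠ 0 := by
    intro S hSP
    apply wvec_ne_zero h2 _ _ P.1.rep_nonzero S.1.rep_nonzero
    rw [Projectivization.mk_rep, Projectivization.mk_rep]
    intro h
    exact hSP (Subtype.ext h.symm)
  have hS2 : ∑ S : {P : Projectivization F (Fin 3 → F) // Qc F P.rep ≠ 0},
      (∑ R : {P : Projectivization F (Fin 3 → F) // Qc F P.rep ≠ 0},
        ind (Bc F P.1.rep R.1.rep = 0) * ind (Bc F R.1.rep S.1.rep = 0)) * x S = 0 := by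
    rw [← swap_helper (fun R => ind (Bc F P.1.rep R.1.rep = 0))
      (fun R S => ind (Bc F R.1.rep S.1.rep = 0)) x]
    apply Finset.sum_eq_zero
    intro R _
    rw [hx R, mul_zero]
  have hcoeff : ∀ S : {P : Projectivization F (Fin 3 → F) // Qc F P.rep ≠ 0},
      (∑ R : {P : Projectivization F (Fin 3 → F) // Qc F P.rep ≠ 0},
        ind (Bc F P.1.rep R.1.rep = 0) * ind (Bc F R.1.rep S.1.rep = 0))
      = (if S = P then 0 else 1 + ind (Qc F (Scratch.wvec P.1.rep S.1.rep) = 0)) := by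
    intro S
    by_cases hSP : S = P
    · rw [if_pos hSP, hSP]
      have hstep : ∀ R : {P : Projectivization F (Fin 3 → F) // Qc F P.rep ≠ 0},
          ind (Bc F P.1.rep R.1.rep = 0) * ind (Bc F R.1.rep P.1.rep = 0)
          = ind (Bc F P.1.rep R.1.rep = 0) := by
        intro R
        by_cases hb : Bc F P.1.rep R.1.rep = 0
        · rw [ind_pos hb, ind_pos (by rw [Scratch.Bc_symm]; exact hb), mul_one]
        · rw [ind_neg hb, zero_mul]
      rw [Finset.sum_congr rfl (fun R _ => hstep R)]
      exact evenPts h2 P.1.rep P.2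
    · rw [if_neg hSP]
      have hstep : ∀ R : {P : Projectivization F (Fin 3 → F) // Qc F P.rep ≠ 0},
          ind (Bc F P.1.rep R.1.rep = 0) * ind (Bc F R.1.rep S.1.rep = 0)
          = ind (Bc F P.1.rep R.1.rep = 0 ∧ Bc F S.1.rep R.1.rep = 0) * (1 : ZMod 2) := by
        intro R
        rw [mul_one, ind_mul_ind, Scratch.Bc_symm R.1.rep S.1.rep]
      rw [Finset.sum_congr rfl (fun R _ => hstep R)]
      by_cases hqw : Qc F (Scratch.wvec P.1.rep S.1.rep) = 0
      · rw [sum_pts_perp_zero h2 P.1.rep S.1.rep (hwneS S hSP) hqw, ind_pos hqw]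
        decide
      · rw [sum_pts_perp_ne h2 P.1.rep S.1.rep hqw, ind_neg hqw]
        decide
  rw [Finset.sum_congr rfl (fun S _ => by rw [hcoeff S])] at hS2
  have hsplit : ∀ S : {P : Projectivization F (Fin 3 → F) // Qc F P.rep ≠ 0},
      (if S = P then 0 else 1 + ind (Qc F (Scratch.wvec P.1.rep S.1.rep) = 0)) * x S
      = ind (S ≠ P) * x S
        + ind (S ≠ P ∧ Qc F (Scratch.wvec P.1.rep S.1.rep) = 0) * x S := by
    intro S
    by_cases hSP : S = P
    · rw [if_pos hSP, ind_neg (not_not_intro hSP), ind_neg (fun hc => hc.1 hSP)]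
      ring
    · rw [if_neg hSP, ind_pos hSP]
      by_cases hq : Qc F (Scratch.wvec P.1.rep S.1.rep) = 0
      · rw [ind_pos hq, ind_pos (⟨hSP, hq⟩ : _ ∧ _)]
        ring
      · rw [ind_neg hq, ind_neg (fun hc => hq hc.2)]
        ring
  rw [Finset.sum_congr rfl (fun S _ => hsplit S), Finset.sum_add_distrib] at hS2
  have he1 : ∑ S : {P : Projectivization F (Fin 3 → F) // Qc F P.rep ≠ 0}, ind (S ≠ P) * x S
      = x P + ∑ S : {P : Projectivization F (Fin 3 → F) // Qc F P.rep ≠ 0}, x S := by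
    have htot : ∑ S : {P : Projectivization F (Fin 3 → F) // Qc F P.rep ≠ 0}, x S
        = (∑ S : {P : Projectivization F (Fin 3 → F) // Qc F P.rep ≠ 0}, ind (S ≠ P) * x S)
          + ∑ S : {P : Projectivization F (Fin 3 → F) // Qc F P.rep ≠ 0}, ind (S = P) * x S := by
      rw [← Finset.sum_add_distrib]
      apply Finset.sum_congr rfl
      intro S _
      by_cases hSP : S = P
      · rw [ind_neg (not_not_intro hSP), ind_pos hSP]
        ring
      · rw [ind_pos hSP, ind_neg (fun h => hSP h)]
        ring
    rw [sum_ind_unique (fun S => S = P) x P (fun t => Iff.rfl)] at htot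
    exact z2_rot htot
  have he2 : ∑ S : {P : Projectivization F (Fin 3 → F) // Qc F P.rep ≠ 0},
      ind (S ≠ P ∧ Qc F (Scratch.wvec P.1.rep S.1.rep) = 0) * x S = 0 := by
    have hpt : ∀ S : {P : Projectivization F (Fin 3 → F) // Qc F P.rep ≠ 0},
        ind (S ≠ P ∧ Qc F (Scratch.wvec P.1.rep S.1.rep) = 0) * x S
        = ∑ X : {P : Projectivization F (Fin 3 → F) // Qc F P.rep = 0},
            ind (S ≠ P) * (ind (Bc F P.1.rep X.1.rep = 0 ∧ Bc F S.1.rep X.1.rep = 0) * x S) := by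
      intro S
      by_cases hSP : S = P
      · rw [ind_neg (fun hc => hc.1 hSP), zero_mul]
        symm
        apply Finset.sum_eq_zero
        intro X _
        rw [ind_neg (not_not_intro hSP), zero_mul]
      · have hone : ∀ X : {P : Projectivization F (Fin 3 → F) // Qc F P.rep = 0},
            ind (S ≠ P) * (ind (Bc F P.1.rep X.1.rep = 0 ∧ Bc F S.1.rep X.1.rep = 0) * x S)
            = ind (Bc F P.1.rep X.1.rep = 0 ∧ Bc F S.1.rep X.1.rep = 0) * x S := by
          intro X
          rw [ind_pos hSP, one_mul]
        rw [Finset.sum_congr rfl (fun X _ => hone X)]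
        by_cases hq : Qc F (Scratch.wvec P.1.rep S.1.rep) = 0
        · rw [ind_pos (⟨hSP, hq⟩ : _ ∧ _), one_mul]
          rw [sum_abs_perp_one h2 P.1.rep S.1.rep (hwneS S hSP) hq (fun _ => x S)]
        · rw [ind_neg (fun hc => hq hc.2), zero_mul]
          rw [sum_abs_perp_zero h2 P.1.rep S.1.rep (hwneS S hSP) hq (fun _ => x S)]
    rw [Finset.sum_congr rfl (fun S _ => hpt S), Finset.sum_comm]
    have hinner : ∀ X : {P : Projectivization F (Fin 3 → F) // Qc F P.rep = 0},
        ∑ S : {P : Projectivization F (Fin 3 → F) // Qc F P.rep ≠ 0},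
          ind (S ≠ P) * (ind (Bc F P.1.rep X.1.rep = 0 ∧ Bc F S.1.rep X.1.rep = 0) * x S)
        = ind (Bc F P.1.rep X.1.rep = 0) *
            ((∑ S : {P : Projectivization F (Fin 3 → F) // Qc F P.rep ≠ 0}, x S)
              + ind (Bc F P.1.rep X.1.rep = 0) * x P) := by
      intro X
      have hterm : ∀ S : {P : Projectivization F (Fin 3 → F) // Qc F P.rep ≠ 0},
          ind (S ≠ P) * (ind (Bc F P.1.rep X.1.rep = 0 ∧ Bc F S.1.rep X.1.rep = 0) * x S)
          = ind (Bc F P.1.rep X.1.rep = 0) * (ind (Bc F X.1.rep S.1.rep = 0) * x S)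
            + ind (Bc F P.1.rep X.1.rep = 0) *
                (ind (S = P) * (ind (Bc F X.1.rep S.1.rep = 0) * x S)) := by
        intro S
        by_cases hSP : S = P
        · rw [ind_neg (not_not_intro hSP), zero_mul, ind_pos hSP, one_mul, z2_add_self]
        · rw [ind_pos hSP, one_mul, ind_neg hSP, zero_mul, mul_zero, add_zero,
            ← ind_mul_ind, Scratch.Bc_symm S.1.rep X.1.rep, mul_assoc]
      rw [Finset.sum_congr rfl (fun S _ => hterm S), Finset.sum_add_distrib,
        ← Finset.mul_sum, ← Finset.mul_sum, dagger h2 x hx X,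
        sum_ind_unique (fun S => S = P)
          (fun S => ind (Bc F X.1.rep S.1.rep = 0) * x S) P (fun t => Iff.rfl),
        Scratch.Bc_symm X.1.rep P.1.rep, mul_add]
    rw [Finset.sum_congr rfl (fun X _ => hinner X)]
    have hfin : ∀ X : {P : Projectivization F (Fin 3 → F) // Qc F P.rep = 0},
        ind (Bc F P.1.rep X.1.rep = 0) *
          ((∑ S : {P : Projectivization F (Fin 3 → F) // Qc F P.rep ≠ 0}, x S)
            + ind (Bc F P.1.rep X.1.rep = 0) * x P)
        = ind (Bc F P.1.rep X.1.rep = 0) *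
            (∑ S : {P : Projectivization F (Fin 3 → F) // Qc F P.rep ≠ 0}, x S)
          + ind (Bc F P.1.rep X.1.rep = 0) * x P := by
      intro X
      rw [mul_add, ← mul_assoc, ind_mul_ind, and_self]
    rw [Finset.sum_congr rfl (fun X _ => hfin X), Finset.sum_add_distrib,
      ← Finset.sum_mul, ← Finset.sum_mul, evenAbs h2 P.1.rep P.2, zero_mul, zero_mul,
      add_zero]
  rw [he1, he2, add_zero] at hS2
  exact z2_eq_of_add_eq_zero hS2

end Kernel2

section CharLemma
variable (F : Type) [Field F] [Fintype F]

lemma two_ne_of_odd_card (hodd : Odd (Fintype.card F)) : (2:F) ≠ 0 := by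
  intro h
  haveI := ringChar.charP F
  have hdvd : ringChar F ∣ 2 := by
    have hcast : ((2:ℕ) : F) = 0 := by exact_mod_cast h
    exact (CharP.cast_eq_zero_iff F (ringChar F) 2).1 hcast
  have hchar2 : ringChar F = 2 := by
    rcases (Nat.dvd_prime Nat.prime_two).1 hdvd with h1 | h1
    · exact absurd h1 (CharP.char_ne_one F (ringChar F))
    · exact h1
  haveI : CharP F 2 := hchar2 ▸ ringChar.charP F
  obtain ⟨n, hp, hcard⟩ := FiniteField.card F 2
  rw [hcard] at hodd
  have heven : Even (2 ^ (n:ℕ)) := (Nat.even_pow).2 ⟨even_two, n.ne_zero⟩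
  exact (Nat.not_even_iff_odd.2 hodd) heven

end CharLemma

/-- The 2-rank of the anisotropic incidence matrix of `PG(2,q)` is `q² - 1`. -/
theorem stmt11 (F : Type) [Field F] [Fintype F] (q : ℕ)
    (hq : Fintype.card F = q) (hodd : Odd q)
    [Fintype {P : Projectivization F (Fin 3 → F) // Qc F P.rep ≠ 0}] :
    (A11 F).rank = q ^ 2 - 1 := by
  classical
  subst hq
  haveI := finite_proj (F := F)
  haveI : Fintype {P : Projectivization F (Fin 3 → F) // Qc F P.rep = 0} := Fintype.ofFinite _
  have h2 : (2:F) ≠ 0 := two_ne_of_odd_card F hodd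
  have hvne : (![0,1,0] : Fin 3 → F) ≠ 0 := by
    intro h
    have := congrFun h 1
    simp at this
  have hQv : Qc F (![0,1,0] : Fin 3 → F) ≠ 0 := by
    simp [Qc]
  have hP0 : Qc F ((Projectivization.mk F ![0,1,0] hvne).rep) ≠ 0 :=
    fun hc => hQv ((Qc_rep_mk _ _).1 hc)
  have hne1 : (fun _ => 1 : {P : Projectivization F (Fin 3 → F) // Qc F P.rep ≠ 0} → ZMod 2) ≠ 0 := by
    intro h
    have := congrFun h ⟨Projectivization.mk F ![0,1,0] hvne, hP0⟩
    simp at this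
  have hmv : ∀ (x : {P : Projectivization F (Fin 3 → F) // Qc F P.rep ≠ 0} → ZMod 2) P,
      Matrix.mulVecLin (A11 F) x P
      = ∑ R : {P : Projectivization F (Fin 3 → F) // Qc F P.rep ≠ 0},
          ind (Bc F P.1.rep R.1.rep = 0) * x R := by
    intro x P
    rw [Matrix.mulVecLin_apply]
    rfl
  have hker : LinearMap.ker (Matrix.mulVecLin (A11 F))
      = Submodule.span (ZMod 2) {(fun _ => 1 : {P : Projectivization F (Fin 3 → F) // Qc F P.rep ≠ 0} → ZMod 2)} := by
    apply le_antisymm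
    · intro x hx
      rw [LinearMap.mem_ker] at hx
      have hx' : ∀ P : {P : Projectivization F (Fin 3 → F) // Qc F P.rep ≠ 0},
          ∑ R : {P : Projectivization F (Fin 3 → F) // Qc F P.rep ≠ 0},
            ind (Bc F P.1.rep R.1.rep = 0) * x R = 0 := by
        intro P
        rw [← hmv x P, hx]
        rfl
      have hconst := ker_constant h2 x hx'
      rw [Submodule.mem_span_singleton]
      refine ⟨∑ R : {P : Projectivization F (Fin 3 → F) // Qc F P.rep ≠ 0}, x R, ?_⟩
      funext P
      rw [Pi.smul_apply, smul_eq_mul, mul_one]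
      exact (hconst P).symm
    · rw [Submodule.span_le, Set.singleton_subset_iff, SetLike.mem_coe, LinearMap.mem_ker]
      funext P
      rw [hmv]
      have : ∀ R : {P : Projectivization F (Fin 3 → F) // Qc F P.rep ≠ 0},
          ind (Bc F P.1.rep R.1.rep = 0) * (1 : ZMod 2) = ind (Bc F P.1.rep R.1.rep = 0) :=
        fun R => mul_one _
      rw [Finset.sum_congr rfl (fun R _ => this R), evenPts h2 P.1.rep P.2]
      rfl
  have hrank := LinearMap.finrank_range_add_finrank_ker (Matrix.mulVecLin (A11 F))
  rw [hker, finrank_span_singleton hne1,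
    Module.finrank_fintype_fun_eq_card, card_pts] at hrank
  have hdef : (A11 F).rank
      = Module.finrank (ZMod 2) (LinearMap.range (Matrix.mulVecLin (A11 F))) := rfl
  rw [hdef]
  omega
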